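/- Let I ⊆ S and u, v ∈ U^I_min. Then the polynomial Ā^I_{uv}(Λ) ∈ 𝔽_p[Λ_1, …, Λ_N] satisfies every box operator of the A-hypergeometric system: for each l = (l_1, …, l_N) ∈ ℤ^N with Σ_{j=1}^N l_j·a_j^+ = 0, one has Π_{j : l_j > 0} (∂/∂Λ_j)^{l_j} Ā^I_{uv} = Π_{j : l_j < 0} (∂/∂Λ_j)^{−l_j} Ā^I_{uv} in 𝔽_p[Λ_1, …, Λ_N]. -/

import Mathlib

open MvPolynomial

/-- `a_j⁺ = (a_{0j}, …, a_{nj}, 1) ∈ ℕ^{n+2}`. -/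
def aplus {n N : ℕ} (a : Fin N → Fin (n + 1) → ℕ) (j : Fin N) : Fin (n + 2) → ℕ :=
  Fin.snoc (a j) 1

/-- The differential operator `∏_j (∂/∂Λ_j)^{k_j}` (the partial derivatives commute,
so the order of composition is immaterial). -/
noncomputable def iterPderiv {N p : ℕ} (k : Fin N → ℕ) (P : MvPolynomial (Fin N) (ZMod p)) :
    MvPolynomial (Fin N) (ZMod p) :=
  (List.finRange N).foldl (fun Q j => (fun R => pderiv j R)^[k j] Q) P

lemma coeff_pderiv' {N : ℕ} {R} [CommRing R] (j : Fin N) (P : MvPolynomial (Fin N) R)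
    (m : Fin N →₀ ℕ) :
    coeff m (pderiv j P) = ((m j + 1 : ℕ) : R) * coeff (m + Finsupp.single j 1) P := by
  induction P using MvPolynomial.induction_on' with
  | add p q hp hq => simp [hp, hq, mul_add]
  | monomial s c =>
    simp only [pderiv_monomial, coeff_monomial]
    by_cases h : s = m + Finsupp.single j 1
    · have h2 : s - Finsupp.single j 1 = m := by rw [h]; exact add_tsub_cancel_right ..
      have h3 : s j = m j + 1 := by rw [h]; simp
      rw [if_pos h, if_pos h2, h3]; push_cast; ring
    · rw [if_neg h, mul_zero]
      rcases eq_or_ne (s - Finsupp.single j 1) m with h2 | h2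
      · have hsj : s j = 0 := by
          by_contra hs
          exact h (by rw [← h2, tsub_add_cancel_of_le (by
            simpa [Finsupp.single_le_iff] using Nat.one_le_iff_ne_zero.2 hs)])
        rw [if_pos h2, hsj]; push_cast; ring
      · rw [if_neg h2]

lemma coeff_pderiv_iter {N p : ℕ} (j : Fin N) (t : ℕ) (P : MvPolynomial (Fin N) (ZMod p))
    (m : Fin N →₀ ℕ) :
    coeff m ((fun R => pderiv j R)^[t] P) =
      (((m j + t).descFactorial t : ℕ) : ZMod p) * coeff (m + Finsupp.single j t) P := by
  induction t generalizing P with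
  | zero => simp
  | succ t ih =>
    rw [Function.iterate_succ_apply, ih, coeff_pderiv']
    have h1 : (m + Finsupp.single j t) j = m j + t := by simp
    have h2 : (m + Finsupp.single j t) + Finsupp.single j 1 = m + Finsupp.single j (t + 1) := by
      rw [add_assoc, ← Finsupp.single_add]
    have h3 : (m j + (t+1)).descFactorial (t+1) = (m j + t + 1) * (m j + t).descFactorial t := by
      rw [← add_assoc]; exact Nat.succ_descFactorial_succ _ t
    rw [h1, h2, h3]
    push_cast; ring

lemma coeff_foldl {N p : ℕ} (k : Fin N → ℕ) (L : List (Fin N)) (hL : L.Nodup)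
    (P : MvPolynomial (Fin N) (ZMod p)) (m : Fin N →₀ ℕ) :
    coeff m (L.foldl (fun Q j => (fun R => pderiv j R)^[k j] Q) P) =
      (∏ j ∈ L.toFinset, (((m j + k j).descFactorial (k j) : ℕ) : ZMod p)) *
        coeff (m + ∑ j ∈ L.toFinset, Finsupp.single j (k j)) P := by
  induction L generalizing P with
  | nil => simp
  | cons j L ih =>
    have hjL : j ∉ L := (List.nodup_cons.1 hL).1
    have hLn : L.Nodup := (List.nodup_cons.1 hL).2
    rw [List.foldl_cons, ih hLn]
    have hS : (∑ j' ∈ L.toFinset, Finsupp.single j' (k j')) j = 0 := by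
      rw [Finset.sum_apply']
      refine Finset.sum_eq_zero fun j' hj' => ?_
      rw [Finsupp.single_apply, if_neg]
      rintro rfl; exact hjL (List.mem_toFinset.1 hj')
    rw [coeff_pderiv_iter, Finsupp.add_apply, hS, add_zero]
    have hjt : j ∉ L.toFinset := fun h => hjL (List.mem_toFinset.1 h)
    rw [List.toFinset_cons, Finset.prod_insert hjt, Finset.sum_insert hjt]
    ring_nf
    rw [add_assoc, add_comm (Finsupp.single j (k j))]

lemma coeff_iterPderiv {N p : ℕ} (k : Fin N → ℕ) (P : MvPolynomial (Fin N) (ZMod p))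
    (m : Fin N →₀ ℕ) :
    coeff m (iterPderiv k P) =
      (∏ j, (((m j + k j).descFactorial (k j) : ℕ) : ZMod p)) *
        coeff (m + ∑ j, Finsupp.single j (k j)) P := by
  have := coeff_foldl k (List.finRange N) (List.nodup_finRange N) P m
  simpa [iterPderiv, List.toFinset_finRange] using this

/-- Key combinatorial lemma: any nonnegative solution `w` of `∑ⱼ wⱼ aⱼ⁺ = p·u − v`
with `u, v ∈ U^I_min` has all entries `≤ p − 1`. -/
lemma key_bound (p n N d : ℕ) (hp : p.Prime) (hd : 2 ≤ d)
    (a : Fin N → Fin (n + 1) → ℕ) (ha : ∀ j, ∑ i, a j i = d)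
    (I : Finset (Fin (n + 1))) (u v : Fin (n + 2) → ℕ)
    (hu : (∑ i : Fin (n + 1), u i.castSucc = d * u (Fin.last (n + 1))) ∧
      (∀ i ∈ I, 0 < u i.castSucc) ∧ u (Fin.last (n + 1)) = (I.card + d - 1) / d)
    (hv : (∑ i : Fin (n + 1), v i.castSucc = d * v (Fin.last (n + 1))) ∧
      (∀ i ∈ I, 0 < v i.castSucc) ∧ v (Fin.last (n + 1)) = (I.card + d - 1) / d)
    (w : Fin N → ℕ)
    (hC : ∀ i : Fin (n + 2), ∑ j, (w j : ℤ) * (aplus a j i : ℤ) = p * u i - v i) :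
    ∀ j, w j ≤ p - 1 := by
  intro j0
  by_contra hcon
  have hp2 : 2 ≤ p := hp.two_le
  have hwp : p ≤ w j0 := by omega
  have hstep : ∀ i : Fin (n + 1),
      a j0 i + (if i ∈ I then 1 else 0) ≤ u i.castSucc := by
    intro i
    have hC' := hC i.castSucc
    have haplus : ∀ j, aplus a j i.castSucc = a j i := fun j => by
      simp [aplus, Fin.snoc_castSucc]
    simp only [haplus] at hC'
    have hone : (w j0 : ℤ) * a j0 i ≤ ∑ j, (w j : ℤ) * a j i := by
      apply Finset.single_le_sum (f := fun j => (w j : ℤ) * a j i)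
        (fun j _ => by positivity) (Finset.mem_univ j0)
    rw [hC'] at hone
    have hpw : (p : ℤ) * a j0 i ≤ (w j0 : ℤ) * a j0 i := by
      apply mul_le_mul_of_nonneg_right (by exact_mod_cast hwp) (by positivity)
    by_cases hi : i ∈ I
    · have hv1 : 1 ≤ (v i.castSucc : ℤ) := by exact_mod_cast hv.2.1 i hi
      have : (p : ℤ) * a j0 i < (p : ℤ) * u i.castSucc := by omega
      have : (a j0 i : ℤ) < u i.castSucc := lt_of_mul_lt_mul_left this (by positivity)
      simp only [if_pos hi]
      exact_mod_cast this
    · have hv0 : 0 ≤ (v i.castSucc : ℤ) := by positivity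
      have : (p : ℤ) * a j0 i ≤ (p : ℤ) * u i.castSucc := by omega
      have : (a j0 i : ℤ) ≤ u i.castSucc :=
        le_of_mul_le_mul_left this (by omega)
      simp only [if_neg hi]
      simpa using (by exact_mod_cast this : a j0 i ≤ u i.castSucc)
  have hsum : d + I.card ≤ ∑ i : Fin (n + 1), u i.castSucc := by
    calc d + I.card = ∑ i : Fin (n + 1), (a j0 i + (if i ∈ I then 1 else 0)) := by
          rw [Finset.sum_add_distrib, ha j0]
          congr 1
          simp [Finset.sum_ite_mem]
      _ ≤ ∑ i : Fin (n + 1), u i.castSucc := Finset.sum_le_sum fun i _ => hstep i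
  rw [hu.1, hu.2.2] at hsum
  have hdm : d * ((I.card + d - 1) / d) ≤ I.card + d - 1 := Nat.mul_div_le _ _
  omega

theorem stmt_7 (p n N d : ℕ) (hp : p.Prime) (hn : 1 ≤ n) (hN : 1 ≤ N) (hd : 2 ≤ d)
    (a : Fin N → Fin (n + 1) → ℕ) (ha : ∀ j, ∑ i, a j i = d)
    (I : Finset (Fin (n + 1)))
    (u v : Fin (n + 2) → ℕ)
    (hu : (∑ i : Fin (n + 1), u i.castSucc = d * u (Fin.last (n + 1))) ∧
      (∀ i ∈ I, 0 < u i.castSucc) ∧ u (Fin.last (n + 1)) = (I.card + d - 1) / d)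
    (hv : (∑ i : Fin (n + 1), v i.castSucc = d * v (Fin.last (n + 1))) ∧
      (∀ i ∈ I, 0 < v i.castSucc) ∧ v (Fin.last (n + 1)) = (I.card + d - 1) / d)
    (A : MvPolynomial (Fin N) (ZMod p))
    (hA : ∀ m : Fin N →₀ ℕ, A.coeff m =
      if (∀ j, m j ≤ p - 1) ∧
          (∀ i : Fin (n + 2), ∑ j, (m j : ℤ) * (aplus a j i : ℤ) = p * u i - v i)
      then (-1) ^ ((I.card + d - 1) / d) * (∏ j, ((m j).factorial : ZMod p))⁻¹
      else 0) :
    ∀ l : Fin N → ℤ, (∀ i : Fin (n + 2), ∑ j, l j * (aplus a j i : ℤ) = 0) →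
      iterPderiv (fun j => (l j).toNat) A = iterPderiv (fun j => (-l j).toNat) A := by
  intro l hl
  haveI : Fact p.Prime := ⟨hp⟩
  ext m
  rw [coeff_iterPderiv, coeff_iterPderiv]
  set kp : Fin N → ℕ := fun j => (l j).toNat with hkp
  set km : Fin N → ℕ := fun j => (-l j).toNat with hkm
  have happ : ∀ (k : Fin N → ℕ) (j : Fin N),
      (m + ∑ j', Finsupp.single j' (k j')) j = m j + k j := by
    intro k j
    rw [Finsupp.add_apply, Finset.sum_apply']
    congr 1
    rw [Finset.sum_eq_single j (fun j' _ hj' => by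
      rw [Finsupp.single_apply, if_neg hj']) (fun h => (h (Finset.mem_univ j)).elim)]
    simp
  -- the lattice conditions for the two shifted exponents are equivalent
  have hcond : ∀ i : Fin (n + 2),
      (∑ j, ((m j + kp j : ℕ) : ℤ) * (aplus a j i : ℤ)) =
      (∑ j, ((m j + km j : ℕ) : ℤ) * (aplus a j i : ℤ)) := by
    intro i
    have : ∀ j, ((m j + kp j : ℕ) : ℤ) * (aplus a j i : ℤ) =
        ((m j + km j : ℕ) : ℤ) * (aplus a j i : ℤ) + l j * (aplus a j i : ℤ) := by
      intro j
      have h1 : ((kp j : ℤ)) - (km j : ℤ) = l j := by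
        simp only [hkp, hkm]; omega
      push_cast
      nlinarith [h1]
    rw [Finset.sum_congr rfl fun j _ => this j, Finset.sum_add_distrib, hl i, add_zero]
  by_cases hc : ∀ i : Fin (n + 2),
      ∑ j, ((m j + km j : ℕ) : ℤ) * (aplus a j i : ℤ) = p * u i - v i
  · -- both coefficients are given by the explicit formula
    have hcp : ∀ i : Fin (n + 2),
        ∑ j, ((m j + kp j : ℕ) : ℤ) * (aplus a j i : ℤ) = p * u i - v i :=
      fun i => (hcond i).trans (hc i)
    have hbp : ∀ j, m j + kp j ≤ p - 1 :=
      key_bound p n N d hp hd a ha I u v hu hv _ hcp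
    have hbm : ∀ j, m j + km j ≤ p - 1 :=
      key_bound p n N d hp hd a ha I u v hu hv _ hc
    have side : ∀ (k : Fin N → ℕ), (∀ j, m j + k j ≤ p - 1) →
        (∏ j, (((m j + k j).descFactorial (k j) : ℕ) : ZMod p)) *
          ((-1 : ZMod p) ^ ((I.card + d - 1) / d) *
            (∏ j, (((m j + k j).factorial : ℕ) : ZMod p))⁻¹) =
        (-1 : ZMod p) ^ ((I.card + d - 1) / d) *
          (∏ j, (((m j).factorial : ℕ) : ZMod p))⁻¹ := by
      intro k hk
      have hp2 := hp.two_le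
      have hfac : ∀ j, ((m j + k j).factorial : ZMod p) ≠ 0 := by
        intro j
        rw [Ne, ZMod.natCast_eq_zero_iff]
        intro hdvd
        have h1 := (Nat.Prime.dvd_factorial hp).1 hdvd
        have h2 := hk j
        omega
      have hfacm : ∀ j, ((m j).factorial : ZMod p) ≠ 0 := by
        intro j
        rw [Ne, ZMod.natCast_eq_zero_iff]
        intro hdvd
        have h1 := (Nat.Prime.dvd_factorial hp).1 hdvd
        have h2 := hk j
        omega
      have hPne : (∏ j, (((m j + k j).factorial : ℕ) : ZMod p)) ≠ 0 :=
        Finset.prod_ne_zero_iff.2 fun j _ => hfac j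
      have hPmne : (∏ j, (((m j).factorial : ℕ) : ZMod p)) ≠ 0 :=
        Finset.prod_ne_zero_iff.2 fun j _ => hfacm j
      have hid : (∏ j, (((m j + k j).descFactorial (k j) : ℕ) : ZMod p)) *
          (∏ j, (((m j).factorial : ℕ) : ZMod p)) =
          ∏ j, (((m j + k j).factorial : ℕ) : ZMod p) := by
        rw [← Finset.prod_mul_distrib]
        refine Finset.prod_congr rfl fun j _ => ?_
        rw [← Nat.cast_mul]
        congr 1
        have := Nat.factorial_mul_descFactorial
          (show k j ≤ m j + k j from le_add_self)
        rw [Nat.add_sub_cancel] at this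
        rw [mul_comm]; exact this
      field_simp
      exact hid
    rw [hA, hA, if_pos, if_pos]
    · have e1 : ∀ j, (m + ∑ j', Finsupp.single j' (kp j')) j = m j + kp j := happ kp
      have e2 : ∀ j, (m + ∑ j', Finsupp.single j' (km j')) j = m j + km j := happ km
      simp only [happ, hkp, hkm]
      rw [side kp hbp, side km hbm]
    · exact ⟨fun j => by rw [happ km j]; exact hbm j,
        fun i => by simpa only [happ, hkm] using hc i⟩
    · exact ⟨fun j => by rw [happ kp j]; exact hbp j,
        fun i => by simpa only [happ, hkp] using hcp i⟩
  · -- both coefficients vanish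
    rw [hA, hA, if_neg, if_neg, mul_zero, mul_zero]
    · intro h
      exact hc fun i => by simpa only [happ, hkm] using h.2 i
    · intro h
      refine hc fun i => ?_
      have := h.2 i
      simp only [happ, hkp] at this
      exact (hcond i).symm.trans this
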